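/- For A symmetric with ρ(A) < 1 and L the block lower-triangular matrix with blocks A^{s−t}, the largest eigenvalue of L L^⊤ is at most 1/(1 − ρ(A))². -/

import Mathlib

open Matrix
open scoped Matrix.Norms.L2Operator

variable {m n : Type*} [Fintype m] [Fintype n] [DecidableEq m] [DecidableEq n]

/-- sq of Euclidean norm -/
lemma euc_norm_sq (x : EuclideanSpace ℝ n) : ‖x‖ ^ 2 = ∑ i, x i ^ 2 := by
  rw [EuclideanSpace.norm_eq, Real.sq_sqrt]
  · simp [Real.norm_eq_abs, sq_abs]
  · positivity

lemma euc_norm_le_of_sq {x : EuclideanSpace ℝ m} {y : EuclideanSpace ℝ n} {C : ℝ}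
    (hC : 0 ≤ C) (h : ∑ i, x i ^ 2 ≤ C ^ 2 * ∑ j, y j ^ 2) : ‖x‖ ≤ C * ‖y‖ := by
  have h1 : ‖x‖ ^ 2 ≤ (C * ‖y‖) ^ 2 := by
    rw [euc_norm_sq, mul_pow]
    rw [euc_norm_sq]
    exact h
  nlinarith [norm_nonneg x, mul_nonneg hC (norm_nonneg y)]

lemma mat_opnorm_le_bound (M : Matrix m n ℝ) {C : ℝ} (hC : 0 ≤ C)
    (h : ∀ x : EuclideanSpace ℝ n,
      ‖((WithLp.equiv 2 (m → ℝ)).symm (M *ᵥ (WithLp.equiv 2 (n → ℝ)) x) : EuclideanSpace ℝ m)‖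
        ≤ C * ‖x‖) : ‖M‖ ≤ C := by
  rw [Matrix.l2_opNorm_def]
  refine ContinuousLinearMap.opNorm_le_bound _ hC fun x => ?_
  simpa [Matrix.toEuclideanLin_apply] using h x

lemma norm_le_of_spectrum {n : Type*} [Fintype n] [DecidableEq n]
    (A : Matrix n n ℝ) (hA : A.IsSymm) {r : ℝ} (hr0 : 0 ≤ r)
    (hr : ∀ μ ∈ spectrum ℝ A, |μ| ≤ r) : ‖A‖ ≤ r := by
  have hH : A.IsHermitian := by
    rwa [Matrix.IsHermitian, Matrix.conjTranspose_eq_transpose_of_trivial]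
  set b := hH.eigenvectorBasis with hb
  refine mat_opnorm_le_bound A hr0 fun x => ?_
  set y : EuclideanSpace ℝ n :=
    (WithLp.equiv 2 (n → ℝ)).symm (A *ᵥ (WithLp.equiv 2 (n → ℝ)) x) with hy
  have hrepr : ∀ i, b.repr y i = hH.eigenvalues i * b.repr x i := by
    intro i
    rw [OrthonormalBasis.repr_apply_apply, OrthonormalBasis.repr_apply_apply]
    rw [PiLp.inner_apply, PiLp.inner_apply]
    simp only [RCLike.inner_apply, starRingEnd_apply, star_trivial]
    have h1 : ∑ j, b i j * y j = (⇑(b i)) ⬝ᵥ (A *ᵥ (WithLp.equiv 2 (n → ℝ)) x) := rfl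
    rw [Finset.sum_congr rfl fun j _ => mul_comm (y j) (b i j)]
    rw [h1, Matrix.dotProduct_mulVec, ← Matrix.mulVec_transpose, hA.eq,
      hH.mulVec_eigenvectorBasis]
    simp [dotProduct, Finset.mul_sum, mul_assoc, mul_comm, mul_left_comm, ← hb]
  calc ‖y‖ = ‖b.repr y‖ := (b.repr.norm_map y).symm
    _ ≤ r * ‖b.repr x‖ := by
        refine euc_norm_le_of_sq hr0 ?_
        rw [Finset.mul_sum]
        refine Finset.sum_le_sum fun i _ => ?_
        rw [hrepr i]
        have hev := hr _ (hH.eigenvalues_mem_spectrum_real i)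
        have h2 : hH.eigenvalues i ^ 2 ≤ r ^ 2 := sq_le_sq' (abs_le.mp hev).1 (abs_le.mp hev).2
        rw [mul_pow]
        exact mul_le_mul_of_nonneg_right h2 (sq_nonneg _)
    _ = r * ‖x‖ := by rw [b.repr.norm_map x]

lemma norm_one_le' {n : Type*} [Fintype n] [DecidableEq n] :
    ‖(1 : Matrix n n ℝ)‖ ≤ 1 := by
  refine mat_opnorm_le_bound _ zero_le_one fun x => ?_
  simp [Matrix.one_mulVec]

lemma norm_pow_le_of_spectrum {n : Type*} [Fintype n] [DecidableEq n]
    (A : Matrix n n ℝ) (hA : A.IsSymm) {r : ℝ} (hr0 : 0 ≤ r)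
    (hr : ∀ μ ∈ spectrum ℝ A, |μ| ≤ r) (k : ℕ) : ‖A ^ k‖ ≤ r ^ k := by
  induction k with
  | zero => simpa using norm_one_le'
  | succ k ih =>
    rw [pow_succ, pow_succ]
    exact le_trans (Matrix.l2_opNorm_mul _ _)
      (mul_le_mul ih (norm_le_of_spectrum A hA hr0 hr) (norm_nonneg _) (pow_nonneg hr0 k))

lemma shift_norm_le {T' N : ℕ} (B : Matrix (Fin N) (Fin N) ℝ) (k : ℕ) {C : ℝ} (hC : 0 ≤ C)
    (hB : ‖B‖ ≤ C) :
    ‖(Matrix.of fun (p q : Fin T' × Fin N) =>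
      if (q.1 : ℕ) + k = (p.1 : ℕ) then B p.2 q.2 else 0)‖ ≤ C := by
  set S : Matrix (Fin T' × Fin N) (Fin T' × Fin N) ℝ := Matrix.of fun p q =>
    if (q.1 : ℕ) + k = (p.1 : ℕ) then B p.2 q.2 else 0 with hS
  refine mat_opnorm_le_bound _ hC fun x => ?_
  set xs : Fin T' → EuclideanSpace ℝ (Fin N) := fun t => WithLp.toLp 2 (fun j => x (t, j)) with hxs
  have hy : ∀ (s : Fin T') (i : Fin N), (S *ᵥ (WithLp.equiv 2 _) x) (s, i) =
      if hks : k ≤ (s : ℕ) then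
        (B *ᵥ (WithLp.equiv 2 (Fin N → ℝ)) (xs ⟨(s : ℕ) - k, by omega⟩)) i
      else 0 := by
    intro s i
    simp only [Matrix.mulVec, dotProduct]
    rw [Fintype.sum_prod_type]
    have hin : ∀ t : Fin T',
        (∑ j, S (s, i) (t, j) * (WithLp.equiv 2 _) x (t, j)) =
          if (t : ℕ) + k = (s : ℕ) then ∑ j, B i j * x (t, j) else 0 := by
      intro t
      by_cases h : (t : ℕ) + k = (s : ℕ) <;> simp [hS, h, Finset.mul_sum]
    rw [Finset.sum_congr rfl fun t _ => hin t]
    by_cases hks : k ≤ (s : ℕ)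
    · rw [dif_pos hks]
      rw [Finset.sum_eq_single (⟨(s : ℕ) - k, by omega⟩ : Fin T')]
      · rw [if_pos (by simp; omega)]
        rfl
      · intro t _ ht
        rw [if_neg]
        intro hc
        exact ht (by apply Fin.ext; simp; omega)
      · simp
    · rw [dif_neg hks]
      exact Finset.sum_eq_zero fun t _ => if_neg (by omega)
  refine euc_norm_le_of_sq hC ?_
  have hnn : ∀ t : Fin T', (0:ℝ) ≤ ∑ j, x (t, j) ^ 2 :=
    fun t => Finset.sum_nonneg fun j _ => sq_nonneg _
  calc ∑ p : Fin T' × Fin N, ((WithLp.equiv 2 _).symm (S *ᵥ (WithLp.equiv 2 _) x) p) ^ 2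
      = ∑ s : Fin T', ∑ i : Fin N, ((S *ᵥ (WithLp.equiv 2 _) x) (s, i)) ^ 2 := by
        rw [Fintype.sum_prod_type]; rfl
    _ ≤ ∑ s : Fin T', if hks : k ≤ (s : ℕ) then
          C ^ 2 * ∑ j, x ((⟨(s : ℕ) - k, by omega⟩ : Fin T'), j) ^ 2 else 0 := by
        refine Finset.sum_le_sum fun s _ => ?_
        by_cases hks : k ≤ (s : ℕ)
        · rw [dif_pos hks]
          set t : Fin T' := ⟨(s : ℕ) - k, by omega⟩
          have h1 : ∑ i : Fin N, ((S *ᵥ (WithLp.equiv 2 _) x) (s, i)) ^ 2 =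
              ∑ i : Fin N, ((B *ᵥ (WithLp.equiv 2 (Fin N → ℝ)) (xs t)) i) ^ 2 :=
            Finset.sum_congr rfl fun i _ => by rw [hy s i, dif_pos hks]
          rw [h1]
          have h2 : ‖((WithLp.equiv 2 (Fin N → ℝ)).symm
              (B *ᵥ (WithLp.equiv 2 (Fin N → ℝ)) (xs t)) : EuclideanSpace ℝ (Fin N))‖
              ≤ C * ‖xs t‖ :=
            le_trans (Matrix.l2_opNorm_mulVec B _) (mul_le_mul_of_nonneg_right hB (norm_nonneg _))
          have h3 := mul_self_le_mul_self (norm_nonneg _) h2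
          rw [← pow_two, ← pow_two, euc_norm_sq, mul_pow, euc_norm_sq] at h3
          exact h3
        · rw [dif_neg hks]
          refine le_of_eq (Finset.sum_eq_zero fun i _ => ?_)
          rw [hy s i, dif_neg hks]
          norm_num
    _ ≤ C ^ 2 * ∑ p : Fin T' × Fin N, x p ^ 2 := by
        rw [Fintype.sum_prod_type, Finset.mul_sum]
        have : ∀ s : Fin T', (if hks : k ≤ (s : ℕ) then
            C ^ 2 * ∑ j, x ((⟨(s : ℕ) - k, by omega⟩ : Fin T'), j) ^ 2 else 0) =
            ∑ t ∈ Finset.univ.filter (fun t : Fin T' => (t : ℕ) + k = (s : ℕ)),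
              C ^ 2 * ∑ j, x (t, j) ^ 2 := by
          intro s
          by_cases hks : k ≤ (s : ℕ)
          · rw [dif_pos hks]
            rw [Finset.sum_eq_single (⟨(s : ℕ) - k, by omega⟩ : Fin T')]
            · intro t ht hne
              exact absurd (Fin.ext (by simp at ht ⊢; omega)) hne
            · intro h
              exact absurd (Finset.mem_filter.mpr ⟨Finset.mem_univ _, by simp; omega⟩) h
          · rw [dif_neg hks]
            rw [Finset.filter_false_of_mem (fun t _ => by omega), Finset.sum_empty]
        rw [Finset.sum_congr rfl fun s _ => this s]
        rw [← Finset.sum_biUnion]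
        · refine Finset.sum_le_sum_of_subset_of_nonneg (Finset.subset_univ _) ?_
          intro t _ _
          exact mul_nonneg (sq_nonneg C) (hnn t)
        · intro a _ b _ hab
          refine Finset.disjoint_left.mpr fun t ht ht' => ?_
          simp only [Finset.mem_filter] at ht ht'
          exact hab (Fin.ext (by omega))



/-- For `A` symmetric with spectral radius `ρ(A) ≤ r < 1` and `L` the block
lower-triangular matrix with blocks `A^{s−t}`, the largest eigenvalue of `L Lᵀ` is at
most `1/(1 − r)²`. -/
theorem stmt9 {N T : ℕ}
    (A : Matrix (Fin N) (Fin N) ℝ) (hA : A.IsSymm)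
    (r : ℝ) (hr : ∀ μ ∈ spectrum ℝ A, |μ| ≤ r) (hr1 : r < 1) (hr0 : 0 ≤ r)
    (L : Matrix (Fin (T - 1) × Fin N) (Fin (T - 1) × Fin N) ℝ)
    (hL : ∀ s t : Fin (T - 1), ∀ i j : Fin N,
      L (s, i) (t, j) = if (t : ℕ) ≤ (s : ℕ) then (A ^ ((s : ℕ) - (t : ℕ))) i j else 0) :
    ∀ μ ∈ spectrum ℝ (L * L.transpose), μ ≤ 1 / (1 - r) ^ 2 := by
  intro μ hμ
  set S : ℕ → Matrix (Fin (T - 1) × Fin N) (Fin (T - 1) × Fin N) ℝ := fun k =>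
    Matrix.of fun p q => if (q.1 : ℕ) + k = (p.1 : ℕ) then (A ^ k) p.2 q.2 else 0 with hSdef
  have hLsum : L = ∑ k ∈ Finset.range (T - 1), S k := by
    ext ⟨s, i⟩ ⟨t, j⟩
    have hs := s.isLt
    have ht := t.isLt
    rw [hL, Matrix.sum_apply]
    simp only [hSdef, Matrix.of_apply]
    by_cases hts : (t : ℕ) ≤ (s : ℕ)
    · rw [if_pos hts, Finset.sum_eq_single ((s : ℕ) - (t : ℕ))]
      · rw [if_pos (by omega)]
      · intro k _ hk
        exact if_neg (by omega)
      · intro h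
        exact absurd (Finset.mem_range.mpr (by omega)) h
    · rw [if_neg hts]
      exact (Finset.sum_eq_zero fun k _ => if_neg (by omega)).symm
  have h1r : (0 : ℝ) < 1 - r := by linarith
  have hgeom : ∑ k ∈ Finset.range (T - 1), r ^ k ≤ 1 / (1 - r) := by
    rw [le_div_iff₀ h1r]
    have hg := geom_sum_mul r (T - 1)
    have hpn : (0 : ℝ) ≤ r ^ (T - 1) := pow_nonneg hr0 _
    nlinarith
  have hnormL : ‖L‖ ≤ 1 / (1 - r) := by
    rw [hLsum]
    calc ‖∑ k ∈ Finset.range (T - 1), S k‖ ≤ ∑ k ∈ Finset.range (T - 1), ‖S k‖ :=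
          norm_sum_le _ _
      _ ≤ ∑ k ∈ Finset.range (T - 1), r ^ k := by
          refine Finset.sum_le_sum fun k _ => ?_
          exact shift_norm_le (A ^ k) k (pow_nonneg hr0 k)
            (norm_pow_le_of_spectrum A hA hr0 hr k)
      _ ≤ 1 / (1 - r) := hgeom
  have hT : L.transpose = L.conjTranspose :=
    (Matrix.conjTranspose_eq_transpose_of_trivial L).symm
  have habs : |μ| ≤ ‖L * L.transpose‖ * ‖(1 : Matrix (Fin (T - 1) × Fin N)
      (Fin (T - 1) × Fin N) ℝ)‖ := by
    simpa [Real.norm_eq_abs] using spectrum.norm_le_norm_mul_of_mem hμ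
  have hmul : ‖L * L.transpose‖ ≤ (1 / (1 - r)) * (1 / (1 - r)) := by
    calc ‖L * L.transpose‖ ≤ ‖L‖ * ‖L.transpose‖ := Matrix.l2_opNorm_mul _ _
      _ = ‖L‖ * ‖L‖ := by rw [hT, Matrix.l2_opNorm_conjTranspose]
      _ ≤ (1 / (1 - r)) * (1 / (1 - r)) :=
          mul_le_mul hnormL hnormL (norm_nonneg _) (by positivity)
  have hone : ‖(1 : Matrix (Fin (T - 1) × Fin N) (Fin (T - 1) × Fin N) ℝ)‖ ≤ 1 := norm_one_le'
  have h0 : (0 : ℝ) ≤ ‖L * L.transpose‖ := norm_nonneg _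
  have : |μ| ≤ 1 / (1 - r) ^ 2 := by
    calc |μ| ≤ ‖L * L.transpose‖ * ‖(1 : Matrix (Fin (T - 1) × Fin N)
          (Fin (T - 1) × Fin N) ℝ)‖ := habs
      _ ≤ ‖L * L.transpose‖ * 1 := mul_le_mul_of_nonneg_left hone h0
      _ = ‖L * L.transpose‖ := mul_one _
      _ ≤ (1 / (1 - r)) * (1 / (1 - r)) := hmul
      _ = 1 / (1 - r) ^ 2 := by rw [div_mul_div_comm, one_mul, sq]
  exact le_trans (le_abs_self μ) this
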